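/- Suppose N points x₁,…,x_N and K points y₁,…,y_K (all distinct, x's distinct from y's) satisfy the Stieltjes relations Σ_j 1/(x_k − y_j) − Σ_{i≠k} 1/(x_k − x_i) + Q'(x_k) = 0 for all k, where Q is a polynomial. Then the logarithmic derivative f = Σ_j 1/(x−y_j) − Σ_i 1/(x−x_i) + Q' has the property that f' + f² has zero residue and zero coefficient of (x−x_k)¹ at each pole x_k; in particular the coefficient of (x−x_k)⁻¹ in f' + f² vanishes. -/

import Mathlib

open Finset
open scoped Topology

lemma analyticAt_deriv' {h : ℂ → ℂ} {c : ℂ} (hh : AnalyticAt ℂ h c) :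
    AnalyticAt ℂ (deriv h) c := by
  obtain ⟨s, hs, hos⟩ := hh.exists_mem_nhds_analyticOnNhd
  exact hos.deriv c (mem_of_mem_nhds hs)

lemma analyticAt_dslope' {h : ℂ → ℂ} {c : ℂ} (hh : AnalyticAt ℂ h c) :
    AnalyticAt ℂ (dslope h c) c := by
  obtain ⟨p, hp⟩ := hh
  exact ⟨p.fslope, hp.has_fpower_series_dslope_fslope⟩

lemma analyticAt_one_div_sub {a c : ℂ} (h : c ≠ a) :
    AnalyticAt ℂ (fun z : ℂ => 1 / (z - a)) c := by
  have h1 : AnalyticAt ℂ (fun z : ℂ => z - a) c := by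
    exact (analyticAt_id).sub analyticAt_const
  have h2 := h1.inv (by simpa [sub_ne_zero] using h)
  have h3 : (fun z : ℂ => 1 / (z - a)) = (fun z : ℂ => z - a)⁻¹ := by
    funext z; simp [one_div]
  rw [h3]; exact h2

/-- If poles xₖ and zeroes y_j satisfy the Stieltjes relations, then
f' + f² (where f = Σ 1/(x−y_j) − Σ 1/(x−x_i) + Q') has, at each pole xₖ,
Laurent expansion 2/(x−xₖ)² + (analytic part) with zero residue, and the
coefficient of (x−xₖ)¹ also vanishes. -/
theorem stmt15 (N K : ℕ) (x : Fin N → ℂ) (y : Fin K → ℂ)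
    (hx : Function.Injective x) (hy : Function.Injective y)
    (hxy : ∀ i j, x i ≠ y j)
    (Q : Polynomial ℂ) (f : ℂ → ℂ)
    (hf : ∀ z : ℂ, f z = ∑ j, 1 / (z - y j) - ∑ i, 1 / (z - x i)
      + (Polynomial.derivative Q).eval z)
    (hSt : ∀ k : Fin N, ∑ j, 1 / (x k - y j)
      - ∑ i ∈ Finset.univ.erase k, 1 / (x k - x i)
      + (Polynomial.derivative Q).eval (x k) = 0) :
    ∀ k : Fin N, ∃ g : ℂ → ℂ, AnalyticAt ℂ g (x k) ∧ deriv g (x k) = 0 ∧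
      ∀ᶠ z in 𝓝[≠] (x k), deriv f z + f z ^ 2 = 2 / (z - x k) ^ 2 + g z := by
  intro k
  set c : ℂ := x k with hc
  set S : ℂ → ℂ := fun z => ∑ j, 1 / (z - y j)
      - ∑ i ∈ Finset.univ.erase k, 1 / (z - x i)
      + (Polynomial.derivative Q).eval z with hSdef
  have hS0 : S c = 0 := hSt k
  -- S is analytic at c
  have hSa : AnalyticAt ℂ S c := by
    have h1 : AnalyticAt ℂ (fun z => ∑ j, 1 / (z - y j)) c :=
      Finset.analyticAt_fun_sum _ (fun j _ => analyticAt_one_div_sub (hxy k j))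
    have h2 : AnalyticAt ℂ (fun z => ∑ i ∈ Finset.univ.erase k, 1 / (z - x i)) c :=
      Finset.analyticAt_fun_sum _ (fun i hi => analyticAt_one_div_sub
        (fun h => (Finset.ne_of_mem_erase hi) (hx h.symm)))
    have h3 : AnalyticAt ℂ (fun z => (Polynomial.derivative Q).eval z) c :=
      (AnalyticOnNhd.eval_polynomial (𝕜 := ℂ) (Polynomial.derivative Q)) c (Set.mem_univ c)
    exact (h1.sub h2).add h3
  -- f = S - 1/(z - c)
  have hfe : f = fun z => S z - (z - c)⁻¹ := by
    funext z
    rw [hf z, hSdef]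
    have hs : ∑ i, 1 / (z - x i)
        = 1 / (z - x k) + ∑ i ∈ Finset.univ.erase k, 1 / (z - x i) :=
      (Finset.add_sum_erase _ _ (Finset.mem_univ k)).symm
    rw [hs]
    simp only [one_div]
    ring
  set h : ℂ → ℂ := dslope S c with hhdef
  have hha : AnalyticAt ℂ h c := analyticAt_dslope' hSa
  have hSh : ∀ z, S z = (z - c) * h z := by
    intro z
    by_cases hz : z = c
    · simp [hz, hS0]
    · rw [hhdef, dslope_of_ne _ hz, slope_def_field, hS0, sub_zero, mul_comm,
        div_mul_cancel₀ _ (sub_ne_zero.mpr hz)]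
  refine ⟨fun z => deriv S z + S z ^ 2 - 2 * h z, ?_, ?_, ?_⟩
  · exact ((analyticAt_deriv' hSa).add (hSa.pow 2)).sub (analyticAt_const.mul hha)
  · -- derivative of g at c is zero
    have hSfun : S = fun w => (w - c) * h w := funext hSh
    have hev : ∀ᶠ z in 𝓝 c,
        (fun z => deriv S z + S z ^ 2 - 2 * h z) z
        = (fun z => (h z + (z - c) * deriv h z) + ((z - c) * h z) ^ 2 - 2 * h z) z := by
      filter_upwards [hha.eventually_analyticAt] with z hz
      have h1 : HasDerivAt h (deriv h z) z := hz.differentiableAt.hasDerivAt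
      have h2 : HasDerivAt (fun w => (w - c) * h w)
          (1 * h z + (z - c) * deriv h z) z :=
        ((hasDerivAt_id z).sub_const c).mul h1
      have h3 : deriv S z = h z + (z - c) * deriv h z := by
        rw [hSfun, h2.deriv]; ring
      simp [h3, ← hSh z]
    rw [Filter.EventuallyEq.deriv_eq hev]
    have h1 : HasDerivAt h (deriv h c) c := hha.differentiableAt.hasDerivAt
    have h1' : HasDerivAt (deriv h) (deriv (deriv h) c) c :=
      (analyticAt_deriv' hha).differentiableAt.hasDerivAt
    have h2 : HasDerivAt (fun z => (z - c) * deriv h z)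
        (1 * deriv h c + (c - c) * deriv (deriv h) c) c :=
      ((hasDerivAt_id c).sub_const c).mul h1'
    have h3 : HasDerivAt (fun z => (z - c) * h z)
        (1 * h c + (c - c) * deriv h c) c :=
      ((hasDerivAt_id c).sub_const c).mul h1
    have h4 : HasDerivAt (fun z => ((z - c) * h z) ^ 2)
        ((2 : ℕ) * ((c - c) * h c) ^ (2 - 1) * (1 * h c + (c - c) * deriv h c)) c :=
      h3.pow 2
    have h5 : HasDerivAt
        (fun z => (h z + (z - c) * deriv h z) + ((z - c) * h z) ^ 2 - 2 * h z)
        ((deriv h c + (1 * deriv h c + (c - c) * deriv (deriv h) c)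
          + (2 : ℕ) * ((c - c) * h c) ^ (2 - 1) * (1 * h c + (c - c) * deriv h c))
          - 2 * deriv h c) c :=
      ((h1.add h2).add h4).sub (h1.const_mul 2)
    rw [h5.deriv]
    ring
  · -- the Laurent expansion on the punctured neighborhood
    have hev : ∀ᶠ z in 𝓝[≠] c, AnalyticAt ℂ S z ∧ z ≠ c := by
      refine Filter.eventually_inf_principal.mpr ?_
      filter_upwards [hSa.eventually_analyticAt] with z hz hz'
      exact ⟨hz, hz'⟩
    filter_upwards [hev] with z hz
    obtain ⟨hSz, hzc⟩ := hz
    have ht : z - c ≠ 0 := sub_ne_zero.mpr hzc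
    have h1 : HasDerivAt S (deriv S z) z := hSz.differentiableAt.hasDerivAt
    have h2 : HasDerivAt (fun w : ℂ => (w - c)⁻¹) (-1 / (z - c) ^ 2) z :=
      ((hasDerivAt_id z).sub_const c).inv ht
    have h3 : HasDerivAt f (deriv S z - -1 / (z - c) ^ 2) z := by
      rw [hfe]; exact h1.sub h2
    rw [h3.deriv, hfe]
    simp only
    rw [hSh z]
    field_simp
    ring
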